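/- Let n ≥ 1, let h_U, h_E ∈ ℂⁿ, and let P, t, σ_U, σ_E be positive reals. For w ∈ ℂⁿ define the forward-link secrecy rate F(w) = t · log₂( σ_E²·(σ_U² + |⟨h_U, w⟩_lin|²) / ( σ_U²·(σ_E² + |⟨h_E, w⟩_lin|²) ) ), where ⟨h, w⟩_lin = Σᵢ hᵢ·wᵢ denotes the bilinear (unconjugated) pairing. Suppose there exists w₀ with ‖w₀‖² ≤ P and σ_E²·|⟨h_U, w₀⟩_lin|² > σ_U²·|⟨h_E, w₀⟩_lin|². Then every maximizer w⋆ of F over the set {w : ‖w‖² ≤ P} satisfies ‖w⋆‖² = P, i.e., the power constraint is active at the optimum. -/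

import Mathlib

/-- If some feasible beamformer achieves a strictly positive forward-link secrecy
rate, then every maximizer of the forward-link secrecy rate `F` over the power
constraint set `{w : ‖w‖² ≤ P}` satisfies the power constraint with equality. -/
theorem power_constraint_active (n : ℕ) (hn : 1 ≤ n) (hU hE : Fin n → ℂ)
    (P t σU σE : ℝ) (hP : 0 < P) (ht : 0 < t) (hσU : 0 < σU) (hσE : 0 < σE)
    (F : (Fin n → ℂ) → ℝ)
    (hF : ∀ w, F w = t * Real.logb 2
      (σE ^ 2 * (σU ^ 2 + ‖∑ i, hU i * w i‖ ^ 2) /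
        (σU ^ 2 * (σE ^ 2 + ‖∑ i, hE i * w i‖ ^ 2))))
    (h0 : ∃ w₀ : Fin n → ℂ, (∑ i, ‖w₀ i‖ ^ 2) ≤ P ∧
      σU ^ 2 * ‖∑ i, hE i * w₀ i‖ ^ 2 <
        σE ^ 2 * ‖∑ i, hU i * w₀ i‖ ^ 2)
    (wstar : Fin n → ℂ)
    (hmem : (∑ i, ‖wstar i‖ ^ 2) ≤ P)
    (hmax : ∀ w : Fin n → ℂ, (∑ i, ‖w i‖ ^ 2) ≤ P → F w ≤ F wstar) :
    (∑ i, ‖wstar i‖ ^ 2) = P := by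
  by_contra hne
  obtain ⟨w₀, hw₀P, hw₀⟩ := h0
  set S := ∑ i, ‖wstar i‖ ^ 2 with hS
  have hSlt : S < P := lt_of_le_of_ne hmem hne
  -- abbreviations
  set a := ‖∑ i, hU i * wstar i‖ with ha
  set b := ‖∑ i, hE i * wstar i‖ with hb
  set a₀ := ‖∑ i, hU i * w₀ i‖ with ha₀
  set b₀ := ‖∑ i, hE i * w₀ i‖ with hb₀
  have han : 0 ≤ a := norm_nonneg _
  have hbn : 0 ≤ b := norm_nonneg _
  have hden : (0:ℝ) < σU ^ 2 * (σE ^ 2 + b ^ 2) := by positivity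
  have hden₀ : (0:ℝ) < σU ^ 2 * (σE ^ 2 + b₀ ^ 2) := by positivity
  have hnum : (0:ℝ) < σE ^ 2 * (σU ^ 2 + a ^ 2) := by positivity
  -- F w₀ > 0
  have hF0pos : 0 < F w₀ := by
    rw [hF w₀]
    apply mul_pos ht
    apply Real.logb_pos one_lt_two
    rw [lt_div_iff₀ hden₀]
    nlinarith
  -- F wstar ≥ F w₀, so the ratio at wstar exceeds 1
  have hratio : 1 < σE ^ 2 * (σU ^ 2 + a ^ 2) / (σU ^ 2 * (σE ^ 2 + b ^ 2)) := by
    have h1 : 0 < F wstar := lt_of_lt_of_le hF0pos (hmax w₀ hw₀P)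
    rw [hF wstar] at h1
    have h2 : 0 < Real.logb 2 (σE ^ 2 * (σU ^ 2 + a ^ 2) / (σU ^ 2 * (σE ^ 2 + b ^ 2))) := by
      by_contra h
      push_neg at h
      nlinarith [mul_nonpos_of_nonneg_of_nonpos (le_of_lt ht) h]
    by_contra h
    push_neg at h
    have := Real.logb_nonpos one_lt_two (le_of_lt (div_pos hnum hden)) h
    linarith
  -- hence σE² a² > σU² b²
  have hkey : σU ^ 2 * b ^ 2 < σE ^ 2 * a ^ 2 := by
    rw [lt_div_iff₀ hden] at hratio
    nlinarith
  -- wstar ≠ 0, so S > 0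
  have hSpos : 0 < S := by
    rcases lt_or_eq_of_le (Finset.sum_nonneg fun i _ => by positivity : 0 ≤ S) with h | h
    · exact h
    · exfalso
      have hz : ∀ i : Fin n, wstar i = 0 := by
        intro i
        have := (Finset.sum_eq_zero_iff_of_nonneg (fun i _ => by positivity)).mp h.symm i
          (Finset.mem_univ i)
        have := pow_eq_zero_iff (n := 2) (by norm_num) |>.mp this
        exact norm_eq_zero.mp this
      have : a = 0 := by
        rw [ha]
        simp [hz]
      rw [this] at hkey
      simp at hkey
      nlinarith [mul_nonneg (sq_nonneg σU) (sq_nonneg b)]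
  -- scale wstar by α = sqrt (P/S)
  set α := Real.sqrt (P / S) with hα
  have hαsq : α ^ 2 = P / S := Real.sq_sqrt (le_of_lt (div_pos hP hSpos))
  have hαpos : 0 < α := Real.sqrt_pos.mpr (div_pos hP hSpos)
  have hc : 1 < α ^ 2 := by
    rw [hαsq]
    rw [lt_div_iff₀ hSpos]
    linarith
  set w := fun i => (α : ℂ) * wstar i with hw
  have hsumU : (∑ i, hU i * w i) = (α : ℂ) * ∑ i, hU i * wstar i := by
    rw [Finset.mul_sum]; congr 1; ext i; ring
  have hsumE : (∑ i, hE i * w i) = (α : ℂ) * ∑ i, hE i * wstar i := by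
    rw [Finset.mul_sum]; congr 1; ext i; ring
  have habsU : ‖∑ i, hU i * w i‖ ^ 2 = α ^ 2 * a ^ 2 := by
    rw [hsumU, norm_mul, Complex.norm_real, Real.norm_eq_abs, abs_of_pos hαpos, mul_pow]
  have habsE : ‖∑ i, hE i * w i‖ ^ 2 = α ^ 2 * b ^ 2 := by
    rw [hsumE, norm_mul, Complex.norm_real, Real.norm_eq_abs, abs_of_pos hαpos, mul_pow]
  have hwP : (∑ i, ‖w i‖ ^ 2) ≤ P := by
    have : (∑ i, ‖w i‖ ^ 2) = α ^ 2 * S := by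
      rw [hS, Finset.mul_sum]
      congr 1; ext i
      rw [hw]
      simp only [norm_mul, Complex.norm_real, Real.norm_eq_abs, abs_of_pos hαpos, mul_pow]
    rw [this, hαsq, div_mul_cancel₀ _ (ne_of_gt hSpos)]
  -- F w > F wstar : contradiction
  have hdenα : (0:ℝ) < σU ^ 2 * (σE ^ 2 + α ^ 2 * b ^ 2) :=
    mul_pos (pow_pos hσU 2)
      (add_pos_of_pos_of_nonneg (pow_pos hσE 2) (mul_nonneg (sq_nonneg α) (sq_nonneg b)))
  clear_value S a b a₀ b₀ α w
  have hlt : F wstar < F w := by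
    rw [hF w, hF wstar, habsU, habsE, ← ha, ← hb]
    apply (mul_lt_mul_iff_right₀ ht).mpr
    apply Real.logb_lt_logb one_lt_two (div_pos hnum hden)
    rw [div_lt_div_iff₀ hden hdenα]
    have h1 : 0 < α ^ 2 - 1 := by linarith
    have h2 : 0 < σE ^ 2 * a ^ 2 - σU ^ 2 * b ^ 2 := by linarith
    have hT : 0 < σE ^ 2 * σU ^ 2 * ((α ^ 2 - 1) * (σE ^ 2 * a ^ 2 - σU ^ 2 * b ^ 2)) :=
      mul_pos (mul_pos (pow_pos hσE 2) (pow_pos hσU 2)) (mul_pos h1 h2)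
    linarith [hT]
  exact absurd (hmax w hwP) (not_le.mpr hlt)
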